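/- Let T be a polynomial of degree n ≥ 1 with complex coefficients. Then not all zeros of T² − 1 can have even multiplicity; i.e., T² − 1 has at least two roots (counted without multiplicity but distinguishing parity) of odd multiplicity. -/

import Mathlib

open Polynomial

/-- A nonzero complex polynomial all of whose roots have even multiplicity is
a constant times a square. -/
lemma sq_of_even_rootMultiplicity (Q : Polynomial ℂ) (hQ : Q ≠ 0)
    (h : ∀ z, Even (Q.rootMultiplicity z)) :
    ∃ S : Polynomial ℂ, Q = C Q.leadingCoeff * S ^ 2 ∧ 2 * S.natDegree = Q.natDegree := by
  classical
  set μ : Multiset ℂ :=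
    ∑ z ∈ Q.roots.toFinset, Multiset.replicate (Q.roots.count z / 2) z with hμ
  have hcount : ∀ z, μ.count z = Q.roots.count z / 2 := by
    intro z
    rw [hμ, Multiset.count_sum']
    by_cases hz : z ∈ Q.roots.toFinset
    · rw [Finset.sum_eq_single z]
      · simp [Multiset.count_replicate]
      · intro b _ hb
        simp only [Multiset.count_replicate]
        rw [if_neg hb]
      · intro hzz; exact absurd hz hzz
    · have h0 : Q.roots.count z = 0 := by
        rw [Multiset.count_eq_zero]
        intro hmem; exact hz (Multiset.mem_toFinset.mpr hmem)
      rw [h0]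
      refine Finset.sum_eq_zero fun b hb => ?_
      have hzb : z ≠ b := fun hzb => hz (hzb ▸ hb)
      simp only [Multiset.count_replicate]
      rw [if_neg hzb.symm]
  have hμμ : μ + μ = Q.roots := by
    refine Multiset.ext.mpr fun z => ?_
    rw [Multiset.count_add, hcount]
    obtain ⟨k, hk⟩ := h z
    rw [count_roots, hk]
    omega
  refine ⟨(μ.map fun a => X - C a).prod, ?_, ?_⟩
  · have hsplit := IsAlgClosed.splits Q
    have := hsplit.eq_prod_roots
    rw [← hμμ, Multiset.map_add, Multiset.prod_add] at this
    rw [sq]; exact this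
  · have hdeg : Multiset.card Q.roots = Q.natDegree :=
      (splits_iff_card_roots).mp (IsAlgClosed.splits Q)
    rw [natDegree_multiset_prod_X_sub_C_eq_card, ← hdeg, ← hμμ, Multiset.card_add]
    ring

theorem exists_odd_multiplicity_root (T : Polynomial ℂ) (hn : 1 ≤ T.natDegree) :
    ∃ z : ℂ, (T ^ 2 - 1).IsRoot z ∧ Odd ((T ^ 2 - 1).rootMultiplicity z) := by
  by_contra hcon
  push_neg at hcon
  have hd1 : (T - 1).natDegree = T.natDegree := by rw [← C_1]; exact natDegree_sub_C
  have hd2 : (T + 1).natDegree = T.natDegree := by rw [← C_1]; exact natDegree_add_C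
  have hT1 : T - 1 ≠ 0 := fun h => by simp [h] at hd1; omega
  have hT2 : T + 1 ≠ 0 := fun h => by simp [h] at hd2; omega
  have hP : T ^ 2 - 1 = (T - 1) * (T + 1) := by ring
  have hPne : (T - 1) * (T + 1) ≠ 0 := mul_ne_zero hT1 hT2
  -- roots of T-1 and T+1 are disjoint
  have key : ∀ z, (T - 1).IsRoot z → ¬ (T + 1).IsRoot z := by
    intro z h1 h2
    simp only [IsRoot, eval_sub, eval_add, eval_one] at h1 h2
    have : (1 : ℂ) = -1 := by linear_combination h2 - h1
    norm_num at this
  -- all roots of T-1 have even multiplicity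
  have hev1 : ∀ z, Even ((T - 1).rootMultiplicity z) := by
    intro z
    by_cases hr : (T - 1).IsRoot z
    · have hroot : (T ^ 2 - 1).IsRoot z := by
        rw [hP]
        show eval z ((T - 1) * (T + 1)) = 0
        rw [eval_mul, hr.eq_zero, zero_mul]
      have hm : (T ^ 2 - 1).rootMultiplicity z
          = (T - 1).rootMultiplicity z + (T + 1).rootMultiplicity z := by
        rw [hP, rootMultiplicity_mul hPne]
      have h0 : (T + 1).rootMultiplicity z = 0 := rootMultiplicity_eq_zero (key z hr)
      have hev := Nat.not_odd_iff_even.mp (hcon z hroot)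
      rw [hm, h0, add_zero] at hev
      exact hev
    · rw [rootMultiplicity_eq_zero hr]; exact Even.zero
  have hev2 : ∀ z, Even ((T + 1).rootMultiplicity z) := by
    intro z
    by_cases hr : (T + 1).IsRoot z
    · have hroot : (T ^ 2 - 1).IsRoot z := by
        rw [hP]
        show eval z ((T - 1) * (T + 1)) = 0
        rw [eval_mul, hr.eq_zero, mul_zero]
      have hm : (T ^ 2 - 1).rootMultiplicity z
          = (T - 1).rootMultiplicity z + (T + 1).rootMultiplicity z := by
        rw [hP, rootMultiplicity_mul hPne]
      have h0 : (T - 1).rootMultiplicity z = 0 := by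
        refine rootMultiplicity_eq_zero fun h1 => key z h1 hr
      have hev := Nat.not_odd_iff_even.mp (hcon z hroot)
      rw [hm, h0, zero_add] at hev
      exact hev
    · rw [rootMultiplicity_eq_zero hr]; exact Even.zero
  obtain ⟨A, hA, hdA⟩ := sq_of_even_rootMultiplicity (T - 1) hT1 hev1
  obtain ⟨B, hB, hdB⟩ := sq_of_even_rootMultiplicity (T + 1) hT2 hev2
  set a := (T - 1).leadingCoeff with ha
  set b := (T + 1).leadingCoeff with hb
  have hane : a ≠ 0 := leadingCoeff_ne_zero.mpr hT1
  have hbne : b ≠ 0 := leadingCoeff_ne_zero.mpr hT2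
  have hAne : A ≠ 0 := by
    intro h; rw [h] at hA; simp at hA; exact hT1 hA
  have hBne : B ≠ 0 := by
    intro h; rw [h] at hB; simp at hB; exact hT2 hB
  -- coprimality
  have hcop : IsCoprime A B := by
    rw [← EuclideanDomain.gcd_isUnit_iff]
    by_contra hu
    have hgne : EuclideanDomain.gcd A B ≠ 0 := fun h =>
      hAne (EuclideanDomain.gcd_eq_zero_iff.mp h).1
    have hdeg : 0 < (EuclideanDomain.gcd A B).degree := by
      rcases lt_or_eq_of_le (Polynomial.zero_le_degree_iff.mpr hgne) with h | h
      · exact h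
      · exact absurd (isUnit_iff_degree_eq_zero.mpr h.symm) hu
    obtain ⟨z, hz⟩ := Complex.exists_root hdeg
    have hzA : A.IsRoot z := hz.dvd (EuclideanDomain.gcd_dvd_left A B)
    have hzB : B.IsRoot z := hz.dvd (EuclideanDomain.gcd_dvd_right A B)
    have e1 : eval z (T - 1) = 0 := by rw [hA]; simp [hzA.eq_zero]
    have e2 : eval z (T + 1) = 0 := by rw [hB]; simp [hzB.eq_zero]
    simp only [eval_sub, eval_add, eval_one] at e1 e2
    have : (1 : ℂ) = -1 := by linear_combination e2 - e1
    norm_num at this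
  -- derivatives
  have hder : C 2 * (C a * A * derivative A) = C 2 * (C b * B * derivative B) := by
    have h1 : derivative (T - 1) = derivative (T + 1) := by simp
    rw [hA, hB, derivative_C_mul, derivative_C_mul, derivative_pow, derivative_pow] at h1
    norm_num at h1
    linear_combination h1
  have hC2 : (C 2 : Polynomial ℂ) ≠ 0 := by
    simp
  have hder' : C a * A * derivative A = C b * B * derivative B :=
    mul_left_cancel₀ hC2 hder
  have hdvd : A ∣ B * derivative B := by
    have h1 : A ∣ C b * (B * derivative B) := ⟨C a * derivative A, by linear_combination hder'.symm⟩
    exact ((isUnit_C.mpr (isUnit_iff_ne_zero.mpr hbne)).dvd_mul_left).mp h1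
  have hdvd' : A ∣ derivative B := hcop.dvd_of_dvd_mul_left hdvd
  have hnB : 1 ≤ B.natDegree := by rw [hd2] at hdB; omega
  have hnAB : A.natDegree = B.natDegree := by rw [hd1] at hdA; rw [hd2] at hdB; omega
  by_cases hB' : derivative B = 0
  · have := natDegree_eq_zero_of_derivative_eq_zero hB'
    omega
  · have h1 : A.natDegree ≤ (derivative B).natDegree := natDegree_le_of_dvd hdvd' hB'
    have h2 : (derivative B).natDegree < B.natDegree := natDegree_derivative_lt (by omega)
    omega
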